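/- Let 𝔗 be a C*-algebra, π : 𝔗 → B(H) a *-representation, and φ : π(𝔗) → ℂ a bounded linear functional. Then |φ ∘ π| = |φ| ∘ π**, where π** : 𝔗** → π(𝔗)** is the weak-* continuous extension of π. -/

import Mathlib

open ComplexOrder Filter Topology

section AbsValue

variable (M : Type*) [NormedRing M] [StarRing M] [NormedAlgebra ℂ M]

/-- `absΦ` is the absolute value (from the polar decomposition) of the weak-*
continuous functional `Φ` on the von Neumann algebra `M`, with partial isometry `v`:
`Φ = absΦ(· v)`, `absΦ` is positive, and `M(1 - v*v) = {ξ | absΦ(ξ*ξ) = 0}`. -/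
def IsAbsValue (Φ absΦ : M →L[ℂ] ℂ) (v : M) : Prop :=
  v * star v * v = v ∧
  (∀ ξ : M, 0 ≤ absΦ (star ξ * ξ)) ∧
  (∀ ξ : M, Φ ξ = absΦ (ξ * v)) ∧
  (∀ ξ : M, absΦ (star ξ * ξ) = 0 ↔ ξ * (star v * v) = 0)

end AbsValue

section Setup

variable (T M : Type*) [NormedRing T] [StarRing T] [NormedAlgebra ℂ T]
  [NormedRing M] [StarRing M] [NormedAlgebra ℂ M]

/-- Abstract model of the canonical inclusion `ι` of a unital C*-algebra `T` into its
bidual von Neumann algebra `M = T**`, together with the weak-* continuous extension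
`hat φ` of each bounded functional `φ` on `T`, and the polar decomposition data
(`absVal φ = |φ|`, with partial isometry `pIso φ`). -/
structure BidualSetup where
  ι : T →L[ℂ] M
  ι_mul : ∀ s t : T, ι (s * t) = ι s * ι t
  ι_star : ∀ t : T, ι (star t) = star (ι t)
  ι_one : ι 1 = 1
  ι_isom : ∀ t : T, ‖ι t‖ = ‖t‖
  hat : (T →L[ℂ] ℂ) →ₗ[ℂ] (M →L[ℂ] ℂ)
  hat_ext : ∀ (φ : T →L[ℂ] ℂ) (t : T), hat φ (ι t) = φ t
  hat_norm : ∀ φ : T →L[ℂ] ℂ, ‖hat φ‖ = ‖φ‖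
  absVal : (T →L[ℂ] ℂ) → (M →L[ℂ] ℂ)
  pIso : (T →L[ℂ] ℂ) → M
  polar : ∀ φ : T →L[ℂ] ℂ, IsAbsValue M (hat φ) (absVal φ) (pIso φ)

end Setup

section AC

variable {T M : Type*} [NormedRing T] [StarRing T] [NormedAlgebra ℂ T]
  [NormedRing M] [StarRing M] [NormedAlgebra ℂ M]

/-- `φ` is absolutely continuous with respect to `ψ`:
`|ψ|(ξ*ξ) = 0` implies `|φ|(ξ*ξ) = 0` for all `ξ ∈ T**`. -/
def AbsCont (B : BidualSetup T M) (φ ψ : T →L[ℂ] ℂ) : Prop :=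
  ∀ ξ : M, B.absVal ψ (star ξ * ξ) = 0 → B.absVal φ (star ξ * ξ) = 0

/-- The support projection `s_φ = v_φ* v_φ` of a functional `φ` on `T`. -/
def suppProj (B : BidualSetup T M) (φ : T →L[ℂ] ℂ) : M :=
  star (B.pIso φ) * B.pIso φ

/-- A state on a unital C*-algebra: a positive unital functional. -/
def IsStateOn (δ : T →L[ℂ] ℂ) : Prop :=
  (∀ t : T, 0 ≤ δ (star t * t)) ∧ δ 1 = 1

end AC

section PosLemmas
set_option linter.unusedSectionVars false
variable {M : Type*} [NormedRing M] [StarRing M] [CStarRing M] [NormedAlgebra ℂ M]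
  [StarModule ℂ M]

lemma aux_im (g : M →L[ℂ] ℂ) (hg : ∀ x : M, 0 ≤ g (star x * x)) (x : M) :
    (g (star x * x)).im = 0 := ((Complex.le_def.mp (hg x)).2).symm

lemma aux_re (g : M →L[ℂ] ℂ) (hg : ∀ x : M, 0 ≤ g (star x * x)) (x : M) :
    0 ≤ (g (star x * x)).re := (Complex.le_def.mp (hg x)).1

lemma aux_herm (g : M →L[ℂ] ℂ) (hg : ∀ x : M, 0 ≤ g (star x * x)) (x y : M) :
    g (star y * x) = starRingEnd ℂ (g (star x * y)) := by
  have h1 := aux_im g hg (x + y)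
  have h2 := aux_im g hg (x + Complex.I • y)
  simp only [star_add, add_mul, mul_add, map_add, star_smul, smul_mul_assoc,
    mul_smul_comm, map_smul, smul_eq_mul, RCLike.star_def, Complex.conj_I,
    Complex.add_im, Complex.mul_im, Complex.mul_re, Complex.neg_re, Complex.neg_im,
    Complex.I_re, Complex.I_im, neg_mul, mul_neg] at h1 h2
  have hxx := aux_im g hg x
  have hyy := aux_im g hg y
  set u := g (star x * y)
  set t := g (star y * x)
  apply Complex.ext <;>
    simp only [Complex.conj_re, Complex.conj_im] <;> linarith

lemma aux_star (g : M →L[ℂ] ℂ) (hg : ∀ x : M, 0 ≤ g (star x * x)) (x : M) :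
    g (star x) = starRingEnd ℂ (g x) := by
  have := aux_herm g hg 1 x
  simpa using this

lemma aux_deg_re (g : M →L[ℂ] ℂ) (hg : ∀ x : M, 0 ≤ g (star x * x)) {z : M}
    (hz : g (star z * z) = 0) (x : M) : (g (x * z)).re = 0 := by
  have key : ∀ s : ℝ, 0 ≤ (g (x * star x)).re + 2 * s * (g (x * z)).re := by
    intro s
    have h0 := aux_re g hg (star x + (s : ℂ) • z)
    have hherm : g (star z * star x) = starRingEnd ℂ (g (x * z)) := by
      have := aux_herm g hg (star x) z
      simpa [star_star] using this
    simp only [star_add, star_smul, add_mul, mul_add, map_add, smul_mul_assoc,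
      mul_smul_comm, map_smul, smul_eq_mul, star_star, RCLike.star_def,
      Complex.conj_ofReal, hz, hherm, mul_zero] at h0
    simp only [Complex.add_re, Complex.mul_re, Complex.ofReal_re, Complex.ofReal_im,
      Complex.conj_re, Complex.conj_im, Complex.zero_re, zero_mul, mul_zero,
      add_zero, zero_add, sub_zero, zero_sub, neg_mul, mul_neg, neg_neg] at h0
    linarith
  by_contra hne
  have h := key ((-((g (x * star x)).re + 1)) / (2 * (g (x * z)).re))
  have e : 2 * ((-((g (x * star x)).re + 1)) / (2 * (g (x * z)).re)) * (g (x * z)).re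
      = -((g (x * star x)).re + 1) := by field_simp
  rw [e] at h
  linarith

lemma aux_deg (g : M →L[ℂ] ℂ) (hg : ∀ x : M, 0 ≤ g (star x * x)) {z : M}
    (hz : g (star z * z) = 0) (x : M) : g (x * z) = 0 := by
  apply Complex.ext
  · simpa using aux_deg_re g hg hz x
  · have h := aux_deg_re g hg hz ((-Complex.I) • x)
    rw [smul_mul_assoc, map_smul] at h
    simpa [Complex.mul_re] using h

lemma aux_cs (g : M →L[ℂ] ℂ) (hg : ∀ x : M, 0 ≤ g (star x * x)) (z : M) :
    Complex.normSq (g z) ≤ (g 1).re * (g (star z * z)).re := by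
  have key : ∀ s : ℝ, 0 ≤ (g (star z * z)).re - 2 * s * Complex.normSq (g z)
      + s ^ 2 * Complex.normSq (g z) * (g 1).re := by
    intro s
    have hs := aux_star g hg z
    have h0 : (0:ℂ) ≤ g (star (z - ((s : ℂ) * g z) • 1) * (z - ((s : ℂ) * g z) • 1)) := hg _
    simp only [star_sub, star_smul, sub_mul, mul_sub, map_sub, smul_mul_assoc,
      mul_smul_comm, mul_one, one_mul, map_smul, smul_eq_mul, star_one,
      RCLike.star_def, map_mul, Complex.conj_ofReal, hs] at h0
    have h1 := (Complex.le_def.mp h0).1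
    simp only [Complex.sub_re, Complex.mul_re, Complex.mul_im, Complex.sub_im,
      Complex.conj_re, Complex.conj_im, Complex.ofReal_re, Complex.ofReal_im,
      Complex.zero_re] at h1
    simp only [Complex.normSq_apply]
    ring_nf at h1 ⊢
    linarith
  set P := (g (star z * z)).re
  set K := Complex.normSq (g z)
  set G := (g 1).re with hGdef
  have hPpos : 0 ≤ P := aux_re g hg z
  have hKpos : 0 ≤ K := Complex.normSq_nonneg _
  have hGpos : 0 ≤ G := by
    have := aux_re g hg 1; simpa [hGdef] using this
  rcases eq_or_lt_of_le hGpos with hG0 | hGpos'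
  · have hK0 : K = 0 := by
      by_contra hne
      have hK' : 0 < K := lt_of_le_of_ne hKpos (Ne.symm hne)
      have h := key ((P + 1) / (2 * K))
      have e : 2 * ((P + 1) / (2 * K)) * K = P + 1 := by field_simp
      rw [← hG0] at h
      rw [e] at h
      linarith
    rw [hK0]
    positivity
  · have h := key (1 / G)
    have e1 : 2 * (1 / G) * K = 2 * K / G := by ring
    have e2 : (1 / G) ^ 2 * K * G = K / G := by
      field_simp
    rw [e1, e2] at h
    have : K / G ≤ P := by ring_nf at h ⊢; linarith
    calc K = (K / G) * G := by field_simp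
    _ ≤ P * G := by
        apply mul_le_mul_of_nonneg_right this (le_of_lt hGpos')
    _ = G * P := by ring

lemma aux_norm (g : M →L[ℂ] ℂ) (hg : ∀ x : M, 0 ≤ g (star x * x)) (z : M) :
    ‖g z‖ ≤ (g 1).re * ‖z‖ := by
  have hGpos : 0 ≤ (g 1).re := by
    have := aux_re g hg 1; simpa using this
  have hN : ‖g‖ ≤ (g 1).re := by
    have hb : ∀ x : M, ‖g x‖ ≤ Real.sqrt ((g 1).re * ‖g‖) * ‖x‖ := by
      intro x
      have h1 := aux_cs g hg x
      have h2 : (g (star x * x)).re ≤ ‖g‖ * ‖x‖ ^ 2 := by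
        calc (g (star x * x)).re ≤ ‖g (star x * x)‖ := Complex.re_le_norm _
        _ ≤ ‖g‖ * ‖star x * x‖ := g.le_opNorm _
        _ = ‖g‖ * (‖x‖ * ‖x‖) := by rw [CStarRing.norm_star_mul_self]
        _ = ‖g‖ * ‖x‖ ^ 2 := by ring
      have h3 : ‖g x‖ ^ 2 ≤ (g 1).re * ‖g‖ * ‖x‖ ^ 2 := by
        have := Complex.normSq_eq_norm_sq (g x)
        have hx : Complex.normSq (g x) = ‖g x‖ ^ 2 := by
          rw [Complex.normSq_eq_norm_sq]
        nlinarith [h1, mul_le_mul_of_nonneg_left h2 hGpos]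
      have h4 : (0:ℝ) ≤ (g 1).re * ‖g‖ := mul_nonneg hGpos (norm_nonneg _)
      calc ‖g x‖ = Real.sqrt (‖g x‖ ^ 2) := by
            rw [Real.sqrt_sq (norm_nonneg _)]
      _ ≤ Real.sqrt ((g 1).re * ‖g‖ * ‖x‖ ^ 2) := Real.sqrt_le_sqrt h3
      _ = Real.sqrt ((g 1).re * ‖g‖) * ‖x‖ := by
            rw [Real.sqrt_mul h4, Real.sqrt_sq (norm_nonneg _)]
    have h5 : ‖g‖ ≤ Real.sqrt ((g 1).re * ‖g‖) :=
      g.opNorm_le_bound (Real.sqrt_nonneg _) hb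
    nlinarith [Real.sq_sqrt (mul_nonneg hGpos (norm_nonneg g : (0:ℝ) ≤ ‖g‖)),
      norm_nonneg g, h5, Real.sqrt_nonneg ((g 1).re * ‖g‖)]
  calc ‖g z‖ ≤ ‖g‖ * ‖z‖ := g.le_opNorm _
  _ ≤ (g 1).re * ‖z‖ := mul_le_mul_of_nonneg_right hN (norm_nonneg _)

lemma aux_pi_norm (a : M) (ha : a * star a * a = a) : ‖a‖ ≤ 1 := by
  have he : (star a * a) * (star a * a) = star a * a := by
    calc (star a * a) * (star a * a) = star a * (a * star a * a) := by
          simp [mul_assoc]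
    _ = star a * a := by rw [ha]
  have hn : ‖star a * a‖ * ‖star a * a‖ = ‖star a * a‖ := by
    have h := CStarRing.norm_star_mul_self (x := star a * a)
    rw [star_mul, star_star, he] at h
    exact h.symm
  have h1 : ‖star a * a‖ ≤ 1 := by nlinarith [norm_nonneg (star a * a)]
  have h2 : ‖a‖ * ‖a‖ = ‖star a * a‖ := (CStarRing.norm_star_mul_self).symm
  nlinarith [norm_nonneg a]
end PosLemmas

/-- for a *-representation `π : T → π(T) = A` and a bounded functional
`φ` on `A`, one has `|φ ∘ π| = |φ| ∘ π**`, where `π** : T** → A**` is the weak-*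
continuous extension of `π` (characterized by `π**(ι_T t) = ι_A (π t)` and
`(φ∘π)^ = φ̂ ∘ π**`). -/
theorem stmt2 {T A MT MA : Type*}
    [NormedRing T] [StarRing T] [CStarRing T] [NormedAlgebra ℂ T] [StarModule ℂ T] [CompleteSpace T]
    [NormedRing A] [StarRing A] [CStarRing A] [NormedAlgebra ℂ A] [StarModule ℂ A] [CompleteSpace A]
    [NormedRing MT] [StarRing MT] [CStarRing MT] [NormedAlgebra ℂ MT] [StarModule ℂ MT] [CompleteSpace MT]
    [NormedRing MA] [StarRing MA] [CStarRing MA] [NormedAlgebra ℂ MA] [StarModule ℂ MA] [CompleteSpace MA]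
    (BT : BidualSetup T MT) (BA : BidualSetup A MA)
    (π : T →⋆ₐ[ℂ] A) (hπ : Function.Surjective π)
    (π'' : MT →L[ℂ] MA)
    (hπ''_mul : ∀ ξ η : MT, π'' (ξ * η) = π'' ξ * π'' η)
    (hπ''_star : ∀ ξ : MT, π'' (star ξ) = star (π'' ξ))
    (hπ''_surj : Function.Surjective π'')
    (hπ''_ext : ∀ t : T, π'' (BT.ι t) = BA.ι (π t))
    (φ : A →L[ℂ] ℂ) (ψ : T →L[ℂ] ℂ)
    (hψ : ∀ t : T, ψ t = φ (π t))
    (hhatψ : ∀ ξ : MT, BT.hat ψ ξ = BA.hat φ (π'' ξ)) :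
    ∀ ξ : MT, BT.absVal ψ ξ = BA.absVal φ (π'' ξ) := by
  obtain ⟨hv, hfpos, hΨ, hfker⟩ := BT.polar ψ
  obtain ⟨hw, hhpos, hΦ, hhker⟩ := BA.polar φ
  set f := BT.absVal ψ with hfdef
  set h := BA.absVal φ with hhdef
  set v := BT.pIso ψ with hvdef
  set w := BA.pIso φ with hwdef
  set a := π'' v with hadef
  set c := star a * w with hcdef
  have hπ1 : π'' 1 = 1 := by
    have h1 := hπ''_ext 1
    rw [map_one π, BT.ι_one, BA.ι_one] at h1
    exact h1
  -- support trick for f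
  have hfsupp : ∀ x : MT, f (x * (star v * v)) = f x := by
    intro x
    have hp2 : (star v * v) * (star v * v) = star v * v := by
      calc (star v * v) * (star v * v) = star v * (v * star v * v) := by
            simp [mul_assoc]
      _ = star v * v := by rw [hv]
    have hker0 : f (star (1 - star v * v) * (1 - star v * v)) = 0 := by
      apply (hfker _).mpr
      rw [sub_mul, one_mul, hp2, sub_self]
    have hd := aux_deg f hfpos hker0 x
    rw [mul_sub, mul_one, map_sub, sub_eq_zero] at hd
    exact hd.symm
  have hhsupp : ∀ x : MA, h (x * (star w * w)) = h x := by
    intro x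
    have hp2 : (star w * w) * (star w * w) = star w * w := by
      calc (star w * w) * (star w * w) = star w * (w * star w * w) := by
            simp [mul_assoc]
      _ = star w * w := by rw [hw]
    have hker0 : h (star (1 - star w * w) * (1 - star w * w)) = 0 := by
      apply (hhker _).mpr
      rw [sub_mul, one_mul, hp2, sub_self]
    have hd := aux_deg h hhpos hker0 x
    rw [mul_sub, mul_one, map_sub, sub_eq_zero] at hd
    exact hd.symm
  have haa : a * star a * a = a := by
    rw [hadef, ← hπ''_star, ← hπ''_mul, ← hπ''_mul, hv]
  have hfc : ∀ ξ : MT, f ξ = h (π'' ξ * c) := by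
    intro ξ
    have e1 : f ξ = BT.hat ψ (ξ * star v) := by
      rw [hΨ (ξ * star v), mul_assoc]
      exact (hfsupp ξ).symm
    rw [e1, hhatψ, hΦ, hπ''_mul, hπ''_star, mul_assoc]
  have hstar3 : ∀ η : MA, h (η * w) = h (η * (a * c)) := by
    intro η
    obtain ⟨ξ, rfl⟩ := hπ''_surj η
    rw [← hΦ, ← hhatψ, hΨ, hfc (ξ * v), hπ''_mul, mul_assoc]
  have hcc : h (star c * c) = h 1 := by
    have e1 := hstar3 (star w)
    have e2 : h (star w * w) = h 1 := by
      have := hhsupp 1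
      rwa [one_mul] at this
    rw [e2] at e1
    rw [e1]
    congr 1
    simp [hcdef, star_mul, star_star, mul_assoc]
  have hwnorm : ‖w‖ ≤ 1 := aux_pi_norm w hw
  have hanorm : ‖a‖ ≤ 1 := aux_pi_norm a haa
  have hcnorm : ‖c‖ ≤ 1 := by
    calc ‖c‖ ≤ ‖star a‖ * ‖w‖ := norm_mul_le _ _
    _ ≤ 1 := by
        rw [norm_star]
        nlinarith [norm_nonneg a, norm_nonneg w]
  have hf1 : f 1 = h c := by
    have := hfc 1
    rwa [hπ1, one_mul] at this
  have hf1pos : (0:ℂ) ≤ f 1 := by have := hfpos 1; simpa using this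
  have hh1pos : (0:ℂ) ≤ h 1 := by have := hhpos 1; simpa using this
  have hf1im : (f 1).im = 0 := ((Complex.le_def.mp hf1pos).2).symm
  have hh1im : (h 1).im = 0 := ((Complex.le_def.mp hh1pos).2).symm
  set F : MA →L[ℂ] ℂ := h.comp ((ContinuousLinearMap.mul ℂ MA).flip c) with hFdef
  have hFapp : ∀ x : MA, F x = h (x * c) := by
    intro x
    simp [hFdef]
  have hFpos : ∀ η : MA, 0 ≤ F (star η * η) := by
    intro η
    obtain ⟨ξ, rfl⟩ := hπ''_surj η
    have e : F (star (π'' ξ) * π'' ξ) = f (star ξ * ξ) := by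
      rw [hFapp, hfc (star ξ * ξ), hπ''_mul, hπ''_star]
    rw [e]
    exact hfpos ξ
  have hF1 : F 1 = f 1 := by rw [hFapp, one_mul, hf1]
  have hFc : h 1 = starRingEnd ℂ (F c) := by
    have e1 : F (star c) = h 1 := by rw [hFapp]; exact hcc
    rw [← e1]
    exact aux_star F hFpos c
  have hle1 : (h 1).re ≤ (f 1).re := by
    calc (h 1).re ≤ ‖h 1‖ := Complex.re_le_norm _
    _ = ‖F c‖ := by rw [hFc, RCLike.norm_conj]
    _ ≤ (F 1).re * ‖c‖ := aux_norm F hFpos c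
    _ ≤ (F 1).re * 1 := by
        apply mul_le_mul_of_nonneg_left hcnorm
        rw [hF1]
        exact (Complex.le_def.mp hf1pos).1
    _ = (f 1).re := by rw [mul_one, hF1]
  have hle2 : (f 1).re ≤ (h 1).re := by
    calc (f 1).re ≤ ‖f 1‖ := Complex.re_le_norm _
    _ = ‖h c‖ := by rw [hf1]
    _ ≤ (h 1).re * ‖c‖ := aux_norm h hhpos c
    _ ≤ (h 1).re * 1 := by
        apply mul_le_mul_of_nonneg_left hcnorm
        exact (Complex.le_def.mp hh1pos).1
    _ = (h 1).re := mul_one _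
  have hfh1 : f 1 = h 1 := Complex.ext (le_antisymm hle2 hle1) (by rw [hf1im, hh1im])
  have hhc : h c = h 1 := by rw [← hf1, hfh1]
  have hhcs : h (star c) = h 1 := by
    rw [aux_star h hhpos c, hhc]
    exact Complex.conj_eq_iff_im.mpr hh1im
  have hkey : h (star (1 - c) * (1 - c)) = 0 := by
    have expand : star (1 - c) * (1 - c) = 1 - c - star c + star c * c := by
      rw [star_sub, star_one]
      noncomm_ring
    rw [expand, map_add, map_sub, map_sub, hhc, hhcs, hcc]
    ring
  intro ξ
  have hdeg := aux_deg h hhpos hkey (π'' ξ)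
  rw [mul_sub, mul_one, map_sub, sub_eq_zero] at hdeg
  rw [hfc ξ, ← hdeg]
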